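/- The evolutionary vector fields form a Lie algebra under the bracket ⟦ξ, λ⟧ = pr v_ξ(λ) − pr v_λ(ξ) on characteristics: this bracket is bilinear, antisymmetric, and satisfies the Jacobi identity. -/

import Mathlib

open MvPolynomial

noncomputable section

/-- The differential polynomial algebra `A = ℝ[u, u', u'', ...]`:
`X k` represents the jet variable `u^{(k)}`. -/
abbrev A : Type := MvPolynomial ℕ ℝ

/-- The total derivative `D`, the derivation with `D(u^{(k)}) = u^{(k+1)}`. -/
def Dtot : Derivation ℝ A A := MvPolynomial.mkDerivation ℝ (fun k => (X (k+1) : A))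

/-- `D` as a plain function (to take iterates `D^k`). -/
def D1 : A → A := fun f => Dtot f

/-- Prolonged evolutionary vector field `pr v_ψ(f) = ∑_k D^k(ψ) ∂f/∂u^{(k)}`. -/
def evol (ψ f : A) : A := ∑ᶠ k : ℕ, D1^[k] ψ * pderiv k f

/-- The Lie bracket on characteristics: `⟦ξ, λ⟧ = pr v_ξ(λ) − pr v_λ(ξ)`. -/
def evBracket (ξ lam : A) : A := evol ξ lam - evol lam ξ

/-- `evol ψ` packaged as a derivation. -/
def evolD (ψ : A) : Derivation ℝ A A :=
  MvPolynomial.mkDerivation ℝ (fun k => D1^[k] ψ)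

lemma support_finite (c : ℕ → A) (f : A) :
    (Function.support fun k => c k * pderiv k f).Finite := by
  apply Set.Finite.subset (Set.Finite.ofFinset f.vars (fun x => Iff.rfl))
  intro k hk
  simp only [Function.mem_support] at hk
  by_contra h
  rw [pderiv_eq_zero_of_notMem_vars h, mul_zero] at hk
  exact hk rfl

/-- Any derivation is given by the chain-rule formula. -/
lemma derivation_eq_finsum (d : Derivation ℝ A A) (f : A) :
    d f = ∑ᶠ k : ℕ, d (X k) * pderiv k f := by
  induction f using MvPolynomial.induction_on with
  | C a =>
      rw [show ((C a : A)) = (algebraMap ℝ A) a from rfl, Derivation.map_algebraMap]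
      rw [finsum_eq_zero_of_forall_eq_zero]
      intro k
      rw [show ((algebraMap ℝ A) a) = (C a : A) from rfl, pderiv_C, mul_zero]
  | add p q hp hq =>
      rw [map_add, hp, hq,
        ← finsum_add_distrib (support_finite _ p) (support_finite _ q)]
      apply finsum_congr
      intro k
      rw [map_add, mul_add]
  | mul_X p n hp =>
      rw [Derivation.leibniz, hp]
      have h1 : ∀ k : ℕ, d (X k) * pderiv k (p * X n)
          = (d (X k) * pderiv k p) * X n
            + (if k = n then d (X n) * p else 0) := by
        intro k
        rw [pderiv_mul, pderiv_X]
        by_cases h : k = n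
        · subst h
          simp [Pi.single_apply, mul_add]
          ring
        · simp [Pi.single_apply, h, mul_add, mul_assoc]
      have h2 : (Function.support fun k => (d (X k) * pderiv k p) * X n).Finite := by
        apply Set.Finite.subset (support_finite (fun k => d (X k)) p)
        intro k hk
        simp only [Function.mem_support] at hk ⊢
        intro h; rw [h, zero_mul] at hk; exact hk rfl
      have h3 : (Function.support fun k =>
          (if k = n then d (X n) * p else 0 : A)).Finite := by
        apply Set.Finite.subset (Set.finite_singleton n)
        intro k hk
        simp only [Function.mem_support] at hk
        by_cases h : k = n
        · simp [h]
        · simp [h] at hk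
      calc p • d (X n) + (X n : A) • ∑ᶠ k, d (X k) * pderiv k p
          = (∑ᶠ k, (d (X k) * pderiv k p) * X n)
            + ∑ᶠ k, (if k = n then d (X n) * p else 0 : A) := by
            rw [finsum_eq_single (fun k => (if k = n then d (X n) * p else 0 : A)) n
              (by intro x hx; simp [hx])]
            simp only [smul_eq_mul]
            rw [← finsum_mul]
            · rw [if_pos trivial]; ring
        _ = ∑ᶠ k, d (X k) * pderiv k (p * X n) := by
            rw [← finsum_add_distrib h2 h3]
            exact finsum_congr fun k => (h1 k).symm

lemma evol_eq (ψ f : A) : evol ψ f = evolD ψ f := by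
  rw [evol, derivation_eq_finsum (evolD ψ) f]
  apply finsum_congr
  intro k
  rw [evolD, mkDerivation_X]

lemma D1_iterate_add (k : ℕ) (a b : A) :
    D1^[k] (a + b) = D1^[k] a + D1^[k] b := by
  induction k generalizing a b with
  | zero => simp
  | succ n ih => rw [Function.iterate_succ_apply, show D1 (a+b) = D1 a + D1 b from
      map_add Dtot a b, ih, Function.iterate_succ_apply, Function.iterate_succ_apply]

lemma D1_iterate_smul (k : ℕ) (r : ℝ) (a : A) :
    D1^[k] (r • a) = r • D1^[k] a := by
  induction k generalizing a with
  | zero => simp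
  | succ n ih => rw [Function.iterate_succ_apply, show D1 (r • a) = r • D1 a from
      Dtot.map_smul r a, ih, Function.iterate_succ_apply]

lemma D1_iterate_sub (k : ℕ) (a b : A) :
    D1^[k] (a - b) = D1^[k] a - D1^[k] b := by
  induction k generalizing a b with
  | zero => simp
  | succ n ih => rw [Function.iterate_succ_apply, show D1 (a-b) = D1 a - D1 b from
      map_sub Dtot a b, ih, Function.iterate_succ_apply, Function.iterate_succ_apply]

lemma evolD_add (a b : A) : evolD (a + b) = evolD a + evolD b := by
  apply derivation_ext
  intro i
  simp [evolD, mkDerivation_X, D1_iterate_add]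

lemma evolD_smul (r : ℝ) (a : A) : evolD (r • a) = r • evolD a := by
  apply derivation_ext
  intro i
  simp [evolD, mkDerivation_X, D1_iterate_smul]

/-- The key fact: prolonged evolutionary fields commute with the total derivative. -/
lemma evolD_comm_D (ψ : A) (f : A) : evolD ψ (Dtot f) = Dtot (evolD ψ f) := by
  have : ⁅evolD ψ, Dtot⁆ = 0 := by
    apply derivation_ext
    intro i
    rw [Derivation.commutator_apply]
    have h1 : Dtot (X i : A) = X (i + 1) := by
      rw [Dtot, mkDerivation_X]
    have h2 : evolD ψ (X i : A) = D1^[i] ψ := by rw [evolD, mkDerivation_X]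
    have h3 : evolD ψ (X (i+1) : A) = D1^[i+1] ψ := by rw [evolD, mkDerivation_X]
    rw [h1, h2, h3, Function.iterate_succ_apply', Derivation.zero_apply]
    simp [D1]
  have := congrArg (fun d : Derivation ℝ A A => d f) this
  simpa [Derivation.commutator_apply, sub_eq_zero] using this

lemma D1_iterate_evolD (ψ : A) (k : ℕ) (f : A) :
    D1^[k] (evolD ψ f) = evolD ψ (D1^[k] f) := by
  induction k generalizing f with
  | zero => simp
  | succ n ih =>
      rw [Function.iterate_succ_apply, Function.iterate_succ_apply,
        show D1 (evolD ψ f) = Dtot (evolD ψ f) from rfl, ← evolD_comm_D, ih]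
      rfl

/-- The commutator of prolonged fields is the prolongation of the bracket. -/
lemma evolD_bracket (ξ lam : A) :
    evolD (evBracket ξ lam) = ⁅evolD ξ, evolD lam⁆ := by
  apply derivation_ext
  intro i
  rw [Derivation.commutator_apply, evolD, mkDerivation_X]
  have h2 : ∀ ψ : A, evolD ψ (X i : A) = D1^[i] ψ := fun ψ => by
    rw [evolD, mkDerivation_X]
  rw [h2, h2, evBracket, evol_eq, evol_eq, D1_iterate_sub, D1_iterate_evolD,
    D1_iterate_evolD]

/-- the bracket `⟦ξ, λ⟧ = pr v_ξ(λ) − pr v_λ(ξ)` is bilinear,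
antisymmetric and satisfies the Jacobi identity, so the evolutionary vector
fields form a Lie algebra. -/
theorem evBracket_lie_algebra :
    (∀ a b c : A, evBracket (a + b) c = evBracket a c + evBracket b c) ∧
    (∀ a b c : A, evBracket a (b + c) = evBracket a b + evBracket a c) ∧
    (∀ (r : ℝ) (a b : A), evBracket (r • a) b = r • evBracket a b) ∧
    (∀ (r : ℝ) (a b : A), evBracket a (r • b) = r • evBracket a b) ∧
    (∀ a b : A, evBracket a b = - evBracket b a) ∧
    (∀ a b c : A,
      evBracket (evBracket a b) c + evBracket (evBracket b c) a
        + evBracket (evBracket c a) b = 0) := by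
  have hb : ∀ a b : A, evBracket a b = evolD a b - evolD b a := by
    intro a b; rw [evBracket, evol_eq, evol_eq]
  refine ⟨?_, ?_, ?_, ?_, ?_, ?_⟩
  · intro a b c
    simp only [hb, evolD_add, Derivation.add_apply, map_add]; ring
  · intro a b c
    simp only [hb, evolD_add, Derivation.add_apply, map_add]; ring
  · intro r a b
    simp only [hb, evolD_smul, Derivation.smul_apply, Derivation.map_smul, smul_sub]
  · intro r a b
    simp only [hb, evolD_smul, Derivation.smul_apply, Derivation.map_smul, smul_sub]
  · intro a b
    simp only [hb]; ring
  · intro a b c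
    simp only [hb]
    have e : ∀ x y z : A,
        evolD (evolD x y - evolD y x) z = evolD x (evolD y z) - evolD y (evolD x z) := by
      intro x y z
      have := congrArg (fun d : Derivation ℝ A A => d z) (evolD_bracket x y)
      simpa [hb, Derivation.commutator_apply] using this
    simp only [e, map_sub]
    ring

end
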